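/- For all sets A, B, C ⊆ α: A ⫝e_C B holds if and only if for every set D with C ⊆ D ⊆ A ∪ C one has A ∩ cl(B ∪ D) ⊆ cl(D). -/

import Mathlib

/-- Exchange independence relative to a closure operator:
`A ⫝e_C B` iff for every finite `s ⊆ A`, `A ∩ cl(s ∪ B ∪ C) ⊆ cl(s ∪ C)`. -/
def IndE {α : Type*} (cl : Set α → Set α) (A C B : Set α) : Prop :=
  ∀ s : Set α, s.Finite → s ⊆ A → A ∩ cl (s ∪ B ∪ C) ⊆ cl (s ∪ C)

theorem stmt10 {α : Type*} (cl : Set α → Set α)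
    (hsub : ∀ X : Set α, X ⊆ cl X)
    (hmono : ∀ X Y : Set α, X ⊆ Y → cl X ⊆ cl Y)
    (hidem : ∀ X : Set α, cl (cl X) = cl X)
    (hfin : ∀ (X : Set α) (b : α), b ∈ cl X → ∃ F : Set α, F ⊆ X ∧ F.Finite ∧ b ∈ cl F) :
    ∀ A C B : Set α,
      IndE cl A C B ↔ ∀ D : Set α, C ⊆ D → D ⊆ A ∪ C → A ∩ cl (B ∪ D) ⊆ cl D := by
  intro A C B
  constructor
  · intro h D hCD hDAC a ⟨haA, hacl⟩
    obtain ⟨F, hFBD, hFfin, haF⟩ := hfin _ _ hacl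
    set s : Set α := (F ∩ D) \ C with hs
    have hsA : s ⊆ A := by
      intro x ⟨⟨_, hxD⟩, hxC⟩
      rcases hDAC hxD with hx | hx
      · exact hx
      · exact absurd hx hxC
    have hsfin : s.Finite := (hFfin.inter_of_left D).diff
    have hkey : a ∈ cl (s ∪ C) := by
      refine h s hsfin hsA ⟨haA, ?_⟩
      refine hmono F _ ?_ haF
      intro x hxF
      rcases hFBD hxF with hx | hx
      · exact Or.inl (Or.inr hx)
      · by_cases hxC : x ∈ C
        · exact Or.inr hxC
        · exact Or.inl (Or.inl ⟨⟨hxF, hx⟩, hxC⟩)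
    refine hmono _ D ?_ hkey
    intro x hx
    rcases hx with ⟨⟨_, hxD⟩, _⟩ | hx
    · exact hxD
    · exact hCD hx
  · intro h s hsfin hsA a ⟨haA, hacl⟩
    have := h (s ∪ C) Set.subset_union_right
      (Set.union_subset (hsA.trans Set.subset_union_left)
        (Set.subset_union_right))
    refine this ⟨haA, ?_⟩
    have : s ∪ B ∪ C = B ∪ (s ∪ C) := by
      ext x; simp [or_assoc, or_comm, or_left_comm]
    rwa [← this]
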